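/- arXiv:2205.08235 — 3 statements merged into one kernel-verified Lean document; each statement's English description precedes it below -/
import Mathlib

section
/- Let G be a connected graph with a bridge e = {v1, v2} whose removal yields components G1 (containing v1) and G2 (containing v2), with m1, m2 edges respectively, and let m = m1 + m2 + 1. Then d_G^T R_G d_G = d_{G1}^T R_{G1} d_{G1} + d_{G2}^T R_{G2} d_{G2} + 4(m2+1)·d_{G1}^T R_{G1} e_{v1} + 4(m1+1)·d_{G2}^T R_{G2} e_{v2} + 2(2m1+1)(2m2+1). -/
open SimpleGraph Finset Matrix
open scoped Classical

noncomputable section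

/-- Number of spanning trees of `G`. -/
noncomputable def tau {V : Type*} [Fintype V] (G : SimpleGraph V) : ℕ :=
  Set.ncard {H : SimpleGraph V | H ≤ G ∧ H.Connected ∧ H.IsAcyclic}

/-- Number of 2-tree spanning forests of `G` separating `i` and `j`. -/
noncomputable def twoForest {V : Type*} [Fintype V] (G : SimpleGraph V) (i j : V) : ℕ :=
  Set.ncard {H : SimpleGraph V | H ≤ G ∧ H.IsAcyclic ∧ ¬ H.Reachable i j ∧
    ∀ v, H.Reachable i v ∨ H.Reachable j v}

/-- The four Penrose equations: `B` is the Moore–Penrose inverse of `A`. -/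
def IsMoorePenroseInv {n : Type*} [Fintype n] (A B : Matrix n n ℝ) : Prop :=
  A * B * A = A ∧ B * A * B = B ∧ (A * B)ᵀ = A * B ∧ (B * A)ᵀ = B * A

/-- Laplacian matrix of a graph. -/
noncomputable def lap {V : Type*} [Fintype V] [DecidableEq V] (G : SimpleGraph V) :
    Matrix V V ℝ :=
  fun i j => if i = j then (G.degree i : ℝ) else if G.Adj i j then -1 else 0

/-- Effective resistance computed from a (Moore–Penrose inverse) matrix `Ld`. -/
noncomputable def effRes {V : Type*} [Fintype V] [DecidableEq V] (Ld : Matrix V V ℝ)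
    (i j : V) : ℝ :=
  (Pi.single i 1 - Pi.single j 1) ⬝ᵥ Ld.mulVec (Pi.single i 1 - Pi.single j 1)

/-- Transition matrix of the simple random walk on `G`. -/
noncomputable def transP {V : Type*} [Fintype V] (G : SimpleGraph V) : Matrix V V ℝ :=
  fun i j => if G.Adj i j then (1 : ℝ) / (G.degree i) else 0

/-- Stationary distribution of the simple random walk. -/
noncomputable def statPi {V : Type*} [Fintype V] (G : SimpleGraph V) (i : V) : ℝ :=
  (G.degree i : ℝ) / (2 * G.edgeFinset.card)

/-- `M` is the matrix of mean first passage times of the random walk on `G`. -/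
def IsMFPT {V : Type*} [Fintype V] (G : SimpleGraph V) (M : V → V → ℝ) : Prop :=
  (∀ j, M j j = 0) ∧ ∀ i j, i ≠ j → M i j = 1 + ∑ k, transP G i k * M k j

/-- Kemeny's constant. -/
noncomputable def kemeny {V : Type*} [Fintype V] (G : SimpleGraph V) (M : V → V → ℝ) : ℝ :=
  ∑ i, ∑ j ∈ Finset.univ.filter (· ≠ i), statPi G i * M i j * statPi G j

/-- Accessibility index of vertex `v`. -/
noncomputable def acc {V : Type*} [Fintype V] (G : SimpleGraph V) (M : V → V → ℝ) (v : V) : ℝ :=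
  ∑ i ∈ Finset.univ.filter (· ≠ v), statPi G i * M i v

/-- Joining `G1` and `G2` by the bridge `v1 ∼ v2`. -/
def chainTwo {V1 V2 : Type*} (G1 : SimpleGraph V1) (G2 : SimpleGraph V2)
    (v1 : V1) (v2 : V2) : SimpleGraph (V1 ⊕ V2) where
  Adj p q :=
    match p, q with
    | Sum.inl a, Sum.inl b => G1.Adj a b
    | Sum.inr a, Sum.inr b => G2.Adj a b
    | Sum.inl a, Sum.inr b => a = v1 ∧ b = v2
    | Sum.inr a, Sum.inl b => b = v1 ∧ a = v2
  symm := ⟨by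
    rintro (a | a) (b | b) h
    · exact G1.adj_symm h
    · exact ⟨h.1, h.2⟩
    · exact ⟨h.1, h.2⟩
    · exact G2.adj_symm h⟩
  loopless := ⟨by
    rintro (a | a) h
    · exact G1.irrefl h
    · exact G2.irrefl h⟩

end


section Helpers

variable {V : Type*} [Fintype V] [DecidableEq V] {G : SimpleGraph V}

lemma lap_eq_lapMatrix (G : SimpleGraph V) : lap G = G.lapMatrix ℝ := by
  ext i j
  by_cases h : i = j
  · subst h; simp [lap, lapMatrix, degMatrix, adjMatrix]
  · simp only [lap, lapMatrix, degMatrix, adjMatrix, Matrix.sub_apply, Matrix.diagonal_apply_ne _ h,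
      if_neg h, Matrix.of_apply, zero_sub]
    split_ifs <;> simp

lemma lap_transpose (G : SimpleGraph V) : (lap G)ᵀ = lap G := by
  rw [lap_eq_lapMatrix]; exact (G.isSymm_lapMatrix (R := ℝ)).eq

lemma lap_mulVec_const (G : SimpleGraph V) (c : ℝ) :
    (lap G).mulVec (fun _ => c) = 0 := by
  have h : (fun _ => c : V → ℝ) = c • (fun _ => (1:ℝ)) := by funext v; simp
  rw [lap_eq_lapMatrix, h, Matrix.mulVec_smul, lapMatrix_mulVec_const_eq_zero, smul_zero]

lemma exists_lap_solution (hG : G.Connected) (x : V → ℝ) (hx : ∑ v, x v = 0) :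
    ∃ y : V → ℝ, (lap G).mulVec y = x := by
  classical
  have hne : Nonempty V := hG.nonempty
  obtain ⟨v₀⟩ := hne
  set f : (V → ℝ) →ₗ[ℝ] (V → ℝ) := Matrix.toLin' (G.lapMatrix ℝ) with hf
  -- the sum functional
  set s : (V → ℝ) →ₗ[ℝ] ℝ :=
    { toFun := fun y => ∑ v, y v
      map_add' := by intro a b; simp [Finset.sum_add_distrib]
      map_smul' := by intro c a; simp [Finset.mul_sum] } with hs
  have hker_f : Module.finrank ℝ (LinearMap.ker f) = 1 := by
    rw [← G.card_connectedComponent_eq_finrank_ker_toLin'_lapMatrix]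
    rw [Fintype.card_eq_one_iff]
    refine ⟨G.connectedComponentMk v₀, ?_⟩
    intro c
    induction c using SimpleGraph.ConnectedComponent.ind with
    | _ w => exact SimpleGraph.ConnectedComponent.eq.mpr (hG.preconnected w v₀)
  have hs_surj : LinearMap.range s = ⊤ := by
    rw [LinearMap.range_eq_top]
    intro c
    refine ⟨Pi.single v₀ c, ?_⟩
    simp [hs, Finset.sum_pi_single]
  have hker_s : Module.finrank ℝ (LinearMap.ker s) = Fintype.card V - 1 := by
    have := LinearMap.finrank_range_add_finrank_ker s
    rw [hs_surj] at this
    simp only [finrank_top, Module.finrank_self,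
      Module.finrank_fintype_fun_eq_card] at this
    omega
  have hrange_le : LinearMap.range f ≤ LinearMap.ker s := by
    rintro _ ⟨y, rfl⟩
    simp only [LinearMap.mem_ker, hf, Matrix.toLin'_apply]
    show ∑ v, (G.lapMatrix ℝ).mulVec y v = 0
    have hrow : ∀ w : V, ∑ v, G.lapMatrix ℝ w v = 0 := by
      intro w
      have h1 := congrFun (G.lapMatrix_mulVec_const_eq_zero (R := ℝ)) w
      simpa [Matrix.mulVec, dotProduct] using h1
    simp only [Matrix.mulVec, dotProduct]
    rw [Finset.sum_comm]
    refine Finset.sum_eq_zero fun w _ => ?_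
    rw [← Finset.sum_mul]
    have : ∑ v, G.lapMatrix ℝ v w = 0 := by
      rw [Finset.sum_congr rfl fun v _ => (G.isSymm_lapMatrix (R := ℝ)).apply w v]
      exact hrow w
    rw [this, zero_mul]
  have hrange_rank : Module.finrank ℝ (LinearMap.range f) = Fintype.card V - 1 := by
    have := LinearMap.finrank_range_add_finrank_ker f
    rw [hker_f] at this
    simp only [Module.finrank_fintype_fun_eq_card] at this
    omega
  have heq : LinearMap.range f = LinearMap.ker s :=
    Submodule.eq_of_le_of_finrank_eq hrange_le (by rw [hrange_rank, hker_s])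
  have hx' : x ∈ LinearMap.ker s := by simp [hs, hx]
  rw [← heq] at hx'
  obtain ⟨y, hy⟩ := hx'
  exact ⟨y, by rw [lap_eq_lapMatrix]; rw [hf] at hy; rwa [Matrix.toLin'_apply] at hy⟩

lemma dot_MP_eq {n : Type*} [Fintype n] {L Ld : Matrix n n ℝ} (hL : Lᵀ = L)
    (hMP : IsMoorePenroseInv L Ld) {x y : n → ℝ} (hy : L.mulVec y = x) :
    x ⬝ᵥ Ld.mulVec x = y ⬝ᵥ x := by
  subst hy
  rw [Matrix.mulVec_mulVec, Matrix.dotProduct_mulVec, Matrix.vecMul_mulVec]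
  rw [show Lᵀ * (Ld * L) = L * Ld * L by rw [hL, Matrix.mul_assoc], hMP.1]
  rw [← Matrix.dotProduct_mulVec]

lemma effRes_eq_sol {n : Type*} [Fintype n] [DecidableEq n] {L Ld : Matrix n n ℝ}
    (hL : Lᵀ = L) (hMP : IsMoorePenroseInv L Ld) {i j : n} {y : n → ℝ}
    (hy : L.mulVec y = (Pi.single i 1 - Pi.single j 1)) :
    effRes Ld i j = y i - y j := by
  rw [effRes, dot_MP_eq hL hMP hy]
  simp only [dotProduct, Pi.sub_apply, mul_sub]
  rw [Finset.sum_sub_distrib]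
  congr 1 <;> simp [Pi.single_apply, mul_ite, Finset.sum_ite_eq']

lemma effRes_comm {n : Type*} [Fintype n] [DecidableEq n] (M : Matrix n n ℝ) (i j : n) :
    effRes M i j = effRes M j i := by
  have h : (Pi.single j 1 - Pi.single i 1 : n → ℝ) = -(Pi.single i 1 - Pi.single j 1) := by
    ring
  rw [effRes, effRes, h, Matrix.mulVec_neg, dotProduct_neg, neg_dotProduct,
    neg_neg]

lemma effRes_self {n : Type*} [Fintype n] [DecidableEq n] (M : Matrix n n ℝ) (i : n) :
    effRes M i i = 0 := by
  simp [effRes]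

section Chain
variable {V1 V2 : Type*} [Fintype V1] [Fintype V2] [DecidableEq V1] [DecidableEq V2]
    (G1 : SimpleGraph V1) (G2 : SimpleGraph V2) (v1 : V1) (v2 : V2)

omit [Fintype V1] [Fintype V2] [DecidableEq V1] [DecidableEq V2] in
lemma chain_adj_ll (a b : V1) : (chainTwo G1 G2 v1 v2).Adj (Sum.inl a) (Sum.inl b) ↔ G1.Adj a b :=
  Iff.rfl

omit [Fintype V1] [Fintype V2] [DecidableEq V1] [DecidableEq V2] in
lemma chain_adj_rr (a b : V2) : (chainTwo G1 G2 v1 v2).Adj (Sum.inr a) (Sum.inr b) ↔ G2.Adj a b :=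
  Iff.rfl

omit [Fintype V1] [Fintype V2] [DecidableEq V1] [DecidableEq V2] in
lemma chain_adj_lr (a : V1) (b : V2) :
    (chainTwo G1 G2 v1 v2).Adj (Sum.inl a) (Sum.inr b) ↔ a = v1 ∧ b = v2 :=
  Iff.rfl

omit [Fintype V1] [Fintype V2] [DecidableEq V1] [DecidableEq V2] in
lemma chain_adj_rl (a : V1) (b : V2) :
    (chainTwo G1 G2 v1 v2).Adj (Sum.inr b) (Sum.inl a) ↔ a = v1 ∧ b = v2 :=
  Iff.rfl

lemma degree_chain_inl (a : V1) :
    ((chainTwo G1 G2 v1 v2).degree (Sum.inl a) : ℝ) =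
      (G1.degree a : ℝ) + (if a = v1 then 1 else 0) := by
  rw [degree_eq_sum_if_adj (G := chainTwo G1 G2 v1 v2) (R := ℝ) (Sum.inl a), Fintype.sum_sum_type,
      degree_eq_sum_if_adj (G := G1) (R := ℝ) a]
  congr 1
  simp only [chain_adj_lr]
  by_cases h : a = v1 <;> simp [h]

lemma degree_chain_inr (b : V2) :
    ((chainTwo G1 G2 v1 v2).degree (Sum.inr b) : ℝ) =
      (G2.degree b : ℝ) + (if b = v2 then 1 else 0) := by
  rw [degree_eq_sum_if_adj (G := chainTwo G1 G2 v1 v2) (R := ℝ) (Sum.inr b), Fintype.sum_sum_type,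
      degree_eq_sum_if_adj (G := G2) (R := ℝ) b, add_comm]
  congr 1
  simp only [chain_adj_rl]
  by_cases h : b = v2 <;> simp [h]

lemma lap_chain_mulVec_inl (y : V1 ⊕ V2 → ℝ) (a : V1) :
    (lap (chainTwo G1 G2 v1 v2)).mulVec y (Sum.inl a) =
      (lap G1).mulVec (y ∘ Sum.inl) a +
        (if a = v1 then y (Sum.inl v1) - y (Sum.inr v2) else 0) := by
  simp only [Matrix.mulVec, dotProduct, Fintype.sum_sum_type]
  have h1 : ∀ b : V1, lap (chainTwo G1 G2 v1 v2) (Sum.inl a) (Sum.inl b) =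
      lap G1 a b + (if a = v1 ∧ a = b then 1 else 0) := by
    intro b
    by_cases hab : a = b
    · subst hab
      simp only [lap, if_pos rfl, degree_chain_inl]
      by_cases h : a = v1 <;> simp [h]
    · simp only [lap, if_neg hab, if_neg (fun h => hab (Sum.inl.inj h)), chain_adj_ll]
      simp [hab]
  have h2 : ∀ b : V2, lap (chainTwo G1 G2 v1 v2) (Sum.inl a) (Sum.inr b) =
      (if a = v1 ∧ b = v2 then -1 else 0) := by
    intro b
    simp only [lap, reduceCtorEq, if_false, chain_adj_lr]
  simp only [h1, h2, add_mul, Finset.sum_add_distrib]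
  have h3 : (∑ b : V1, (if a = v1 ∧ a = b then (1:ℝ) else 0) * y (Sum.inl b)) =
      if a = v1 then y (Sum.inl v1) else 0 := by
    by_cases h : a = v1
    · subst h; simp [Finset.sum_ite_eq]
    · simp [h]
  have h4 : (∑ b : V2, (if a = v1 ∧ b = v2 then (-1:ℝ) else 0) * y (Sum.inr b)) =
      if a = v1 then -y (Sum.inr v2) else 0 := by
    by_cases h : a = v1 <;> simp [h]
  rw [h3, h4]
  by_cases h : a = v1 <;> simp [h, Function.comp] <;> ring

lemma lap_chain_mulVec_inr (y : V1 ⊕ V2 → ℝ) (b : V2) :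
    (lap (chainTwo G1 G2 v1 v2)).mulVec y (Sum.inr b) =
      (lap G2).mulVec (y ∘ Sum.inr) b +
        (if b = v2 then y (Sum.inr v2) - y (Sum.inl v1) else 0) := by
  simp only [Matrix.mulVec, dotProduct, Fintype.sum_sum_type]
  have h1 : ∀ c : V2, lap (chainTwo G1 G2 v1 v2) (Sum.inr b) (Sum.inr c) =
      lap G2 b c + (if b = v2 ∧ b = c then 1 else 0) := by
    intro c
    by_cases hbc : b = c
    · subst hbc
      simp only [lap, if_pos rfl, degree_chain_inr]
      by_cases h : b = v2 <;> simp [h]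
    · simp only [lap, if_neg hbc, if_neg (fun h => hbc (Sum.inr.inj h)), chain_adj_rr]
      simp [hbc]
  have h2 : ∀ a : V1, lap (chainTwo G1 G2 v1 v2) (Sum.inr b) (Sum.inl a) =
      (if a = v1 ∧ b = v2 then -1 else 0) := by
    intro a
    simp only [lap, reduceCtorEq, if_false, chain_adj_rl]
  simp only [h1, h2, add_mul, Finset.sum_add_distrib]
  have h3 : (∑ c : V2, (if b = v2 ∧ b = c then (1:ℝ) else 0) * y (Sum.inr c)) =
      if b = v2 then y (Sum.inr v2) else 0 := by
    by_cases h : b = v2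
    · subst h; simp [Finset.sum_ite_eq]
    · simp [h]
  have h4 : (∑ a : V1, (if a = v1 ∧ b = v2 then (-1:ℝ) else 0) * y (Sum.inl a)) =
      if b = v2 then -y (Sum.inl v1) else 0 := by
    by_cases h : b = v2 <;> simp [h]
  rw [h3, h4]
  by_cases h : b = v2 <;> simp [h, Function.comp] <;> ring


variable {G1 G2 v1 v2}

lemma sum_single_sub {W : Type*} [Fintype W] [DecidableEq W] (i j : W) :
    ∑ v, (Pi.single i 1 - Pi.single j 1 : W → ℝ) v = 0 := by
  simp [Pi.single_apply, Finset.sum_sub_distrib]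

lemma effRes_chain_inl_inl (h1 : G1.Connected)
    {Ld : Matrix (V1 ⊕ V2) (V1 ⊕ V2) ℝ} {Ld1 : Matrix V1 V1 ℝ}
    (hLd : IsMoorePenroseInv (lap (chainTwo G1 G2 v1 v2)) Ld)
    (hLd1 : IsMoorePenroseInv (lap G1) Ld1) (i j : V1) :
    effRes Ld (Sum.inl i) (Sum.inl j) = effRes Ld1 i j := by
  obtain ⟨y1, hy1⟩ := exists_lap_solution h1 (Pi.single i 1 - Pi.single j 1)
    (sum_single_sub i j)
  set y : V1 ⊕ V2 → ℝ := Sum.elim y1 (fun _ => y1 v1) with hy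
  have hsol : (lap (chainTwo G1 G2 v1 v2)).mulVec y =
      Pi.single (Sum.inl i) 1 - Pi.single (Sum.inl j) 1 := by
    funext p
    cases p with
    | inl a =>
      rw [lap_chain_mulVec_inl]
      rw [show y ∘ Sum.inl = y1 from rfl, hy1]
      simp [hy, Pi.single_apply]
    | inr b =>
      rw [lap_chain_mulVec_inr]
      rw [show y ∘ Sum.inr = (fun _ => y1 v1) from rfl, lap_mulVec_const]
      simp [hy, Pi.single_apply]
  rw [effRes_eq_sol (lap_transpose _) hLd hsol, effRes_eq_sol (lap_transpose _) hLd1 hy1]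
  simp [hy]

lemma effRes_chain_inr_inr (h2 : G2.Connected)
    {Ld : Matrix (V1 ⊕ V2) (V1 ⊕ V2) ℝ} {Ld2 : Matrix V2 V2 ℝ}
    (hLd : IsMoorePenroseInv (lap (chainTwo G1 G2 v1 v2)) Ld)
    (hLd2 : IsMoorePenroseInv (lap G2) Ld2) (i j : V2) :
    effRes Ld (Sum.inr i) (Sum.inr j) = effRes Ld2 i j := by
  obtain ⟨y2, hy2⟩ := exists_lap_solution h2 (Pi.single i 1 - Pi.single j 1)
    (sum_single_sub i j)
  set y : V1 ⊕ V2 → ℝ := Sum.elim (fun _ => y2 v2) y2 with hy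
  have hsol : (lap (chainTwo G1 G2 v1 v2)).mulVec y =
      Pi.single (Sum.inr i) 1 - Pi.single (Sum.inr j) 1 := by
    funext p
    cases p with
    | inl a =>
      rw [lap_chain_mulVec_inl]
      rw [show y ∘ Sum.inl = (fun _ => y2 v2) from rfl, lap_mulVec_const]
      simp [hy, Pi.single_apply]
    | inr b =>
      rw [lap_chain_mulVec_inr]
      rw [show y ∘ Sum.inr = y2 from rfl, hy2]
      simp [hy, Pi.single_apply]
  rw [effRes_eq_sol (lap_transpose _) hLd hsol, effRes_eq_sol (lap_transpose _) hLd2 hy2]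
  simp [hy]

lemma effRes_chain_inl_inr (h1 : G1.Connected) (h2 : G2.Connected)
    {Ld : Matrix (V1 ⊕ V2) (V1 ⊕ V2) ℝ} {Ld1 : Matrix V1 V1 ℝ} {Ld2 : Matrix V2 V2 ℝ}
    (hLd : IsMoorePenroseInv (lap (chainTwo G1 G2 v1 v2)) Ld)
    (hLd1 : IsMoorePenroseInv (lap G1) Ld1)
    (hLd2 : IsMoorePenroseInv (lap G2) Ld2) (i : V1) (j : V2) :
    effRes Ld (Sum.inl i) (Sum.inr j) = effRes Ld1 i v1 + 1 + effRes Ld2 v2 j := by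
  obtain ⟨y1, hy1⟩ := exists_lap_solution h1 (Pi.single i 1 - Pi.single v1 1)
    (sum_single_sub i v1)
  obtain ⟨y2, hy2⟩ := exists_lap_solution h2 (Pi.single v2 1 - Pi.single j 1)
    (sum_single_sub v2 j)
  set c : ℝ := 1 - y1 v1 + y2 v2 with hc
  set y : V1 ⊕ V2 → ℝ := Sum.elim (fun a => y1 a + c) y2 with hy
  have hsol : (lap (chainTwo G1 G2 v1 v2)).mulVec y =
      Pi.single (Sum.inl i) 1 - Pi.single (Sum.inr j) 1 := by
    funext p
    cases p with
    | inl a =>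
      rw [lap_chain_mulVec_inl]
      have e2 : (lap G1).mulVec (y ∘ Sum.inl) = (lap G1).mulVec y1 := by
        rw [show y ∘ Sum.inl = y1 + (fun _ => c) from rfl, Matrix.mulVec_add,
          lap_mulVec_const, add_zero]
      rw [e2, hy1]
      simp only [hy, Sum.elim_inl, Sum.elim_inr, Pi.sub_apply, Pi.single_apply,
        Sum.inl.injEq, reduceCtorEq, if_false]
      by_cases h : a = v1 <;> simp [h, hc] <;> ring
    | inr b =>
      rw [lap_chain_mulVec_inr]
      rw [show y ∘ Sum.inr = y2 from rfl, hy2]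
      simp only [hy, Sum.elim_inl, Sum.elim_inr, Pi.sub_apply, Pi.single_apply,
        Sum.inr.injEq, reduceCtorEq, if_false]
      by_cases h : b = v2 <;> simp [h, hc] <;> ring
  rw [effRes_eq_sol (lap_transpose _) hLd hsol, effRes_eq_sol (lap_transpose _) hLd1 hy1,
    effRes_eq_sol (lap_transpose _) hLd2 hy2]
  simp only [hy, Sum.elim_inl, Sum.elim_inr, hc]
  ring

end Chain

end Helpers

/-- with `G` obtained by joining `G1` and `G2` with the bridge
`v1 ∼ v2`, `d_Gᵀ R_G d_G` decomposes as stated. -/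
theorem dRd_chainTwo {V1 V2 : Type*} [Fintype V1] [Fintype V2]
    [DecidableEq V1] [DecidableEq V2]
    (G1 : SimpleGraph V1) (G2 : SimpleGraph V2) (v1 : V1) (v2 : V2)
    (h1 : G1.Connected) (h2 : G2.Connected)
    (Ld : Matrix (V1 ⊕ V2) (V1 ⊕ V2) ℝ) (Ld1 : Matrix V1 V1 ℝ) (Ld2 : Matrix V2 V2 ℝ)
    (hLd : IsMoorePenroseInv (lap (chainTwo G1 G2 v1 v2)) Ld)
    (hLd1 : IsMoorePenroseInv (lap G1) Ld1)
    (hLd2 : IsMoorePenroseInv (lap G2) Ld2)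
    (m1 m2 : ℕ) (hm1 : m1 = G1.edgeFinset.card) (hm2 : m2 = G2.edgeFinset.card) :
    (∑ p, ∑ q, ((chainTwo G1 G2 v1 v2).degree p : ℝ) * effRes Ld p q *
        ((chainTwo G1 G2 v1 v2).degree q : ℝ)) =
      (∑ i, ∑ j, (G1.degree i : ℝ) * effRes Ld1 i j * (G1.degree j : ℝ)) +
      (∑ i, ∑ j, (G2.degree i : ℝ) * effRes Ld2 i j * (G2.degree j : ℝ)) +
      4 * ((m2 : ℝ) + 1) * (∑ i, (G1.degree i : ℝ) * effRes Ld1 i v1) +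
      4 * ((m1 : ℝ) + 1) * (∑ i, (G2.degree i : ℝ) * effRes Ld2 i v2) +
      2 * (2 * (m1 : ℝ) + 1) * (2 * (m2 : ℝ) + 1) := by
  classical
  set T1 := ∑ i, ∑ j, (G1.degree i : ℝ) * effRes Ld1 i j * (G1.degree j : ℝ) with hT1
  set T2 := ∑ i, ∑ j, (G2.degree i : ℝ) * effRes Ld2 i j * (G2.degree j : ℝ) with hT2
  set A := ∑ i, (G1.degree i : ℝ) * effRes Ld1 i v1 with hA
  set B := ∑ i, (G2.degree i : ℝ) * effRes Ld2 i v2 with hB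
  have hRll := effRes_chain_inl_inl (G2 := G2) (v2 := v2) h1 hLd hLd1
  have hRrr := effRes_chain_inr_inr (G1 := G1) (v1 := v1) h2 hLd hLd2
  have hRlr := effRes_chain_inl_inr h1 h2 hLd hLd1 hLd2
  have hRrl : ∀ (i : V2) (j : V1), effRes Ld (Sum.inr i) (Sum.inl j) =
      effRes Ld1 j v1 + 1 + effRes Ld2 v2 i := fun i j => by
    rw [effRes_comm]; exact hRlr j i
  have hS1 : ∑ i, (G1.degree i : ℝ) = 2 * (m1 : ℝ) := by
    rw [← Nat.cast_sum, G1.sum_degrees_eq_twice_card_edges, hm1]; push_cast; ring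
  have hS2 : ∑ i, (G2.degree i : ℝ) = 2 * (m2 : ℝ) := by
    rw [← Nat.cast_sum, G2.sum_degrees_eq_twice_card_edges, hm2]; push_cast; ring
  have hA' : ∑ j, effRes Ld1 v1 j * (G1.degree j : ℝ) = A := by
    rw [hA]
    exact Finset.sum_congr rfl fun j _ => by rw [effRes_comm]; ring
  have hB' : ∑ j, effRes Ld2 v2 j * (G2.degree j : ℝ) = B := by
    rw [hB]
    exact Finset.sum_congr rfl fun j _ => by rw [effRes_comm]; ring
  -- sums of chain degrees
  have hsum_l : ∑ i, ((chainTwo G1 G2 v1 v2).degree (Sum.inl i) : ℝ) = 2 * (m1 : ℝ) + 1 := by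
    simp only [degree_chain_inl]
    rw [Finset.sum_add_distrib, hS1]
    simp
  have hsum_r : ∑ j, ((chainTwo G1 G2 v1 v2).degree (Sum.inr j) : ℝ) = 2 * (m2 : ℝ) + 1 := by
    simp only [degree_chain_inr]
    rw [Finset.sum_add_distrib, hS2]
    simp
  have hsum_lr : ∑ i, ((chainTwo G1 G2 v1 v2).degree (Sum.inl i) : ℝ) * effRes Ld1 i v1
      = A := by
    simp only [degree_chain_inl, add_mul, ite_mul, one_mul, zero_mul,
      Finset.sum_add_distrib, Finset.sum_ite_eq', Finset.mem_univ, if_true, effRes_self,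
      add_zero]
    rw [hA]
  have hsum_rr : ∑ j, effRes Ld2 v2 j * ((chainTwo G1 G2 v1 v2).degree (Sum.inr j) : ℝ)
      = B := by
    simp only [degree_chain_inr, mul_add, mul_ite, mul_one, mul_zero,
      Finset.sum_add_distrib, Finset.sum_ite_eq', Finset.mem_univ, if_true, effRes_self,
      add_zero, hB']
  have hsum_rl : ∑ j, effRes Ld1 j v1 * ((chainTwo G1 G2 v1 v2).degree (Sum.inl j) : ℝ)
      = A := by
    simp only [degree_chain_inl, mul_add, mul_ite, mul_one, mul_zero,
      Finset.sum_add_distrib, Finset.sum_ite_eq', Finset.mem_univ, if_true, effRes_self,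
      add_zero]
    rw [hA]
    exact Finset.sum_congr rfl fun j _ => by ring
  -- the four blocks
  have HLL : (∑ i, ∑ j, ((chainTwo G1 G2 v1 v2).degree (Sum.inl i) : ℝ) *
      effRes Ld (Sum.inl i) (Sum.inl j) * ((chainTwo G1 G2 v1 v2).degree (Sum.inl j) : ℝ))
      = T1 + 2 * A := by
    simp only [hRll, degree_chain_inl, add_mul, mul_add, ite_mul, mul_ite, one_mul, mul_one,
      zero_mul, mul_zero, Finset.sum_add_distrib, Finset.sum_ite_irrel, Finset.sum_const_zero,
      Finset.sum_ite_eq', Finset.mem_univ, if_true, effRes_self]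
    rw [hA', ← hT1, ← hA]
    ring
  have HRR : (∑ i, ∑ j, ((chainTwo G1 G2 v1 v2).degree (Sum.inr i) : ℝ) *
      effRes Ld (Sum.inr i) (Sum.inr j) * ((chainTwo G1 G2 v1 v2).degree (Sum.inr j) : ℝ))
      = T2 + 2 * B := by
    simp only [hRrr, degree_chain_inr, add_mul, mul_add, ite_mul, mul_ite, one_mul, mul_one,
      zero_mul, mul_zero, Finset.sum_add_distrib, Finset.sum_ite_irrel, Finset.sum_const_zero,
      Finset.sum_ite_eq', Finset.mem_univ, if_true, effRes_self]
    rw [hB', ← hT2, ← hB]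
    ring
  have HLR : (∑ i, ∑ j, ((chainTwo G1 G2 v1 v2).degree (Sum.inl i) : ℝ) *
      effRes Ld (Sum.inl i) (Sum.inr j) * ((chainTwo G1 G2 v1 v2).degree (Sum.inr j) : ℝ))
      = (A + (2 * (m1:ℝ) + 1)) * (2 * (m2:ℝ) + 1) + (2 * (m1:ℝ) + 1) * B := by
    have step1 : ∀ i : V1, (∑ j, ((chainTwo G1 G2 v1 v2).degree (Sum.inl i) : ℝ) *
        effRes Ld (Sum.inl i) (Sum.inr j) * ((chainTwo G1 G2 v1 v2).degree (Sum.inr j) : ℝ))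
        = (((chainTwo G1 G2 v1 v2).degree (Sum.inl i) : ℝ) * (effRes Ld1 i v1 + 1)) *
            (∑ j, ((chainTwo G1 G2 v1 v2).degree (Sum.inr j) : ℝ)) +
          ((chainTwo G1 G2 v1 v2).degree (Sum.inl i) : ℝ) *
            (∑ j, effRes Ld2 v2 j * ((chainTwo G1 G2 v1 v2).degree (Sum.inr j) : ℝ)) := by
      intro i
      rw [Finset.mul_sum, Finset.mul_sum, ← Finset.sum_add_distrib]
      refine Finset.sum_congr rfl fun j _ => ?_
      rw [hRlr]
      ring
    rw [Finset.sum_congr rfl fun i _ => step1 i, Finset.sum_add_distrib,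
      ← Finset.sum_mul, ← Finset.sum_mul, hsum_r, hsum_rr, hsum_l]
    have : (∑ i, ((chainTwo G1 G2 v1 v2).degree (Sum.inl i) : ℝ) * (effRes Ld1 i v1 + 1))
        = A + (2 * (m1:ℝ) + 1) := by
      simp only [mul_add, mul_one, Finset.sum_add_distrib, hsum_lr, hsum_l]
    rw [this]
  have HRL : (∑ i, ∑ j, ((chainTwo G1 G2 v1 v2).degree (Sum.inr i) : ℝ) *
      effRes Ld (Sum.inr i) (Sum.inl j) * ((chainTwo G1 G2 v1 v2).degree (Sum.inl j) : ℝ))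
      = ((2 * (m2:ℝ) + 1) + B) * (2 * (m1:ℝ) + 1) + (2 * (m2:ℝ) + 1) * A := by
    have step1 : ∀ i : V2, (∑ j, ((chainTwo G1 G2 v1 v2).degree (Sum.inr i) : ℝ) *
        effRes Ld (Sum.inr i) (Sum.inl j) * ((chainTwo G1 G2 v1 v2).degree (Sum.inl j) : ℝ))
        = (((chainTwo G1 G2 v1 v2).degree (Sum.inr i) : ℝ) * (1 + effRes Ld2 v2 i)) *
            (∑ j, ((chainTwo G1 G2 v1 v2).degree (Sum.inl j) : ℝ)) +
          ((chainTwo G1 G2 v1 v2).degree (Sum.inr i) : ℝ) *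
            (∑ j, effRes Ld1 j v1 * ((chainTwo G1 G2 v1 v2).degree (Sum.inl j) : ℝ)) := by
      intro i
      rw [Finset.mul_sum, Finset.mul_sum, ← Finset.sum_add_distrib]
      refine Finset.sum_congr rfl fun j _ => ?_
      rw [hRrl]
      ring
    rw [Finset.sum_congr rfl fun i _ => step1 i, Finset.sum_add_distrib,
      ← Finset.sum_mul, ← Finset.sum_mul, hsum_l, hsum_rl, hsum_r]
    have : (∑ i, ((chainTwo G1 G2 v1 v2).degree (Sum.inr i) : ℝ) * (1 + effRes Ld2 v2 i))
        = (2 * (m2:ℝ) + 1) + B := by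
      simp only [mul_add, mul_one, Finset.sum_add_distrib, hsum_r]
      congr 1
      simp only [degree_chain_inr, add_mul, ite_mul, one_mul, zero_mul,
        Finset.sum_add_distrib, Finset.sum_ite_eq', Finset.mem_univ, if_true, effRes_self,
        add_zero]
      rw [hB]
      exact Finset.sum_congr rfl fun j _ => by rw [effRes_comm]
    rw [this]
  calc (∑ p, ∑ q, ((chainTwo G1 G2 v1 v2).degree p : ℝ) * effRes Ld p q *
        ((chainTwo G1 G2 v1 v2).degree q : ℝ))
      = (∑ i, ∑ j, ((chainTwo G1 G2 v1 v2).degree (Sum.inl i) : ℝ) *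
          effRes Ld (Sum.inl i) (Sum.inl j) * ((chainTwo G1 G2 v1 v2).degree (Sum.inl j) : ℝ))
        + (∑ i, ∑ j, ((chainTwo G1 G2 v1 v2).degree (Sum.inl i) : ℝ) *
          effRes Ld (Sum.inl i) (Sum.inr j) * ((chainTwo G1 G2 v1 v2).degree (Sum.inr j) : ℝ))
        + ((∑ i, ∑ j, ((chainTwo G1 G2 v1 v2).degree (Sum.inr i) : ℝ) *
          effRes Ld (Sum.inr i) (Sum.inl j) * ((chainTwo G1 G2 v1 v2).degree (Sum.inl j) : ℝ))
        + (∑ i, ∑ j, ((chainTwo G1 G2 v1 v2).degree (Sum.inr i) : ℝ) *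
          effRes Ld (Sum.inr i) (Sum.inr j) * ((chainTwo G1 G2 v1 v2).degree (Sum.inr j) : ℝ))) := by
        simp only [Fintype.sum_sum_type, Finset.sum_add_distrib]
        ring
    _ = T1 + T2 + 4 * ((m2 : ℝ) + 1) * A + 4 * ((m1 : ℝ) + 1) * B +
        2 * (2 * (m1 : ℝ) + 1) * (2 * (m2 : ℝ) + 1) := by
        rw [HLL, HLR, HRL, HRR]
        ring
end

section
/- Let T be a tree on n vertices. A vertex v is a centroid of T if and only if the accessibility index α_T(v) for the simple random walk on T is minimal among all vertices, where α_T(v) = Σ_{i≠v} π_i m_{i,v}. -/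
open SimpleGraph Finset Matrix
open scoped Classical

/-- `v` is a centroid of `T`: every component of `T − v` has at most `⌊n/2⌋` vertices. -/
def IsCentroid {V : Type*} [Fintype V] (T : SimpleGraph V) (v : V) : Prop :=
  ∀ w : {u : V // u ≠ v},
    (((SimpleGraph.induce {u : V | u ≠ v} T).connectedComponentMk w).supp).ncard ≤
      Fintype.card V / 2

section Aux
set_option linter.unusedSectionVars false

variable {V : Type*} [Fintype V]

/-- The `y`-side of the edge `xy`: vertices reachable from `y` after deleting edge `xy`. -/
noncomputable def sideF (T : SimpleGraph V) (x y : V) : Finset V :=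
  Finset.univ.filter (fun i => (T.deleteEdges {s(x,y)}).Reachable y i)

lemma mem_sideF {T : SimpleGraph V} {x y i : V} :
    i ∈ sideF T x y ↔ (T.deleteEdges {s(x,y)}).Reachable y i := by
  simp [sideF]

lemma mem_sideF' {T : SimpleGraph V} {x y i : V} :
    i ∈ sideF T y x ↔ (T.deleteEdges {s(x,y)}).Reachable x i := by
  rw [mem_sideF, Sym2.eq_swap]

lemma sideF_self (T : SimpleGraph V) (x y : V) : y ∈ sideF T x y :=
  mem_sideF.2 (Reachable.refl y)

lemma not_mem_sideF {T : SimpleGraph V} (hac : T.IsAcyclic) {x y : V} (hadj : T.Adj x y) :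
    x ∉ sideF T x y := by
  intro hx
  have hb := (isAcyclic_iff_forall_adj_isBridge.mp hac) hadj
  rw [isBridge_iff] at hb
  exact hb (mem_sideF.1 hx).symm

lemma sideF_disjoint {T : SimpleGraph V} (hac : T.IsAcyclic) {x y i : V} (hadj : T.Adj x y)
    (h1 : i ∈ sideF T x y) : i ∉ sideF T y x := by
  intro h2
  have hb := (isAcyclic_iff_forall_adj_isBridge.mp hac) hadj
  rw [isBridge_iff] at hb
  exact hb ((mem_sideF'.1 h2).trans (mem_sideF.1 h1).symm)

lemma sideF_adj {T : SimpleGraph V} {x y i k : V} (hik : T.Adj i k)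
    (he : s(i,k) ≠ s(x,y)) (hi : i ∈ sideF T x y) : k ∈ sideF T x y := by
  rw [mem_sideF] at hi ⊢
  refine hi.trans (Adj.reachable ?_)
  rw [deleteEdges_adj]
  exact ⟨hik, by simpa using he⟩

lemma sideF_cover {T : SimpleGraph V} (hconn : T.Connected) {x y : V} (i : V) :
    i ∈ sideF T y x ∨ i ∈ sideF T x y := by
  suffices H : ∀ {a b : V} (_ : T.Walk a b),
      (b ∈ sideF T y x ∨ b ∈ sideF T x y) → (a ∈ sideF T y x ∨ a ∈ sideF T x y) by
    obtain ⟨p⟩ := hconn.preconnected i x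
    exact H p (Or.inl (sideF_self T y x))
  intro a b p
  induction p with
  | nil => exact id
  | @cons a c b hac q ih =>
    intro hb
    by_cases he : s(a, c) = s(x, y)
    · rw [Sym2.eq_iff] at he
      rcases he with ⟨rfl, rfl⟩ | ⟨rfl, rfl⟩
      · exact Or.inl (sideF_self T c a)
      · exact Or.inr (sideF_self T c a)
    · rcases ih hb with h | h
      · exact Or.inl (sideF_adj hac.symm (by rw [Sym2.eq_swap] at he ⊢; simpa [Sym2.eq_swap] using he) h)
      · exact Or.inr (sideF_adj hac.symm (by rw [@Sym2.eq_swap _ c a]; exact he) h)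

lemma sideF_closure {T : SimpleGraph V} (hac : T.IsAcyclic) {x y i k : V} (hadj : T.Adj x y)
    (hi : i ∈ sideF T x y) (hik : T.Adj i k) (hcond : ¬(i = y ∧ k = x)) : k ∈ sideF T x y := by
  have hix : i ≠ x := by
    rintro rfl; exact not_mem_sideF hac hadj hi
  refine sideF_adj hik ?_ hi
  intro he
  rw [Sym2.eq_iff] at he
  rcases he with ⟨rfl, rfl⟩ | ⟨rfl, rfl⟩
  · exact hix rfl
  · exact hcond ⟨rfl, rfl⟩

lemma mem_sideF_of_mem_support {T : SimpleGraph V} {x y i u : V}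
    (p : (T.deleteEdges {s(x,y)}).Walk y i) (hu : u ∈ p.support) : u ∈ sideF T x y :=
  mem_sideF.2 ⟨p.takeUntil u hu⟩

lemma induce_reachable_of_walk {G : SimpleGraph V} {S : Set V} :
    ∀ {a b : V} (p : G.Walk a b) (hS : ∀ u ∈ p.support, u ∈ S),
    (G.induce S).Reachable ⟨a, hS a p.start_mem_support⟩ ⟨b, hS b p.end_mem_support⟩ := by
  intro a b p
  induction p with
  | nil => intro hS; exact Reachable.refl _
  | @cons a c b hac q ih =>
    intro hS
    have h1 : (G.induce S).Adj ⟨a, hS a (Walk.cons hac q).start_mem_support⟩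
        ⟨c, hS c (by simp)⟩ := by simpa using hac
    exact h1.reachable.trans (ih fun u hu => hS u (by simp [hu]))

lemma degree_pos_of_connected {T : SimpleGraph V} (hconn : T.Connected) {i j : V}
    (hne : i ≠ j) : 0 < T.degree i := by
  obtain ⟨p⟩ := hconn.preconnected i j
  cases p with
  | nil => exact absurd rfl hne
  | cons h q => exact T.degree_pos_iff_exists_adj i |>.2 ⟨_, h⟩

variable {T : SimpleGraph V} {x y : V}

lemma side_inter_nbr_of_mem (hac : T.IsAcyclic) (hadj : T.Adj x y) {k : V}
    (hk : k ∈ sideF T x y) (hky : k ≠ y) :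
    sideF T x y ∩ T.neighborFinset k = T.neighborFinset k := by
  refine Finset.inter_eq_right.2 (fun j hj => ?_)
  rw [mem_neighborFinset] at hj
  exact sideF_closure hac hadj hk hj (fun h => hky h.1)

lemma side_inter_nbr_y (hac : T.IsAcyclic) (hadj : T.Adj x y) :
    sideF T x y ∩ T.neighborFinset y = (T.neighborFinset y).erase x := by
  ext j
  simp only [Finset.mem_inter, mem_neighborFinset, Finset.mem_erase]
  constructor
  · rintro ⟨hj, hadj'⟩
    refine ⟨fun h => not_mem_sideF hac hadj (h ▸ hj), hadj'⟩
  · rintro ⟨hjx, hadj'⟩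
    exact ⟨sideF_closure hac hadj (sideF_self T x y) hadj' (fun h => hjx h.2), hadj'⟩

lemma side_inter_nbr_of_not_mem (hac : T.IsAcyclic) (hadj : T.Adj x y) {k : V}
    (hk : k ∉ sideF T x y) (hkx : k ≠ x) :
    sideF T x y ∩ T.neighborFinset k = ∅ := by
  refine Finset.eq_empty_of_forall_notMem (fun j hj => ?_)
  rw [Finset.mem_inter, mem_neighborFinset] at hj
  exact hk (sideF_closure hac hadj hj.1 hj.2.symm (fun h => hkx h.2))

lemma side_inter_nbr_x (hac : T.IsAcyclic) (hadj : T.Adj x y) :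
    sideF T x y ∩ T.neighborFinset x = {y} := by
  ext j
  simp only [Finset.mem_inter, mem_neighborFinset, Finset.mem_singleton]
  constructor
  · rintro ⟨hj, hadj'⟩
    by_contra hjy
    exact not_mem_sideF hac hadj (sideF_closure hac hadj hj hadj'.symm (fun h => hjy h.1))
  · intro h
    rw [h]
    exact ⟨sideF_self T x y, hadj⟩

lemma sum_deg_sideF (hT : T.IsTree) (hadj : T.Adj x y) :
    ∑ i ∈ sideF T x y, T.degree i + 1 = 2 * (sideF T x y).card := by
  classical
  set S : Set V := ↑(sideF T x y) with hS
  have hyS : y ∈ S := sideF_self T x y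
  set H : SimpleGraph S := T.induce S with hH
  have hHac : H.IsAcyclic := by
    intro v c hc
    exact hT.IsAcyclic _
      ((Walk.map_isCycle_iff_of_injective (f := (SimpleGraph.Embedding.induce (G := T) S).toHom)
        (fun a b h => (SimpleGraph.Embedding.induce (G := T) S).injective h)).2 hc)
  have hreach : ∀ c : S, H.Reachable ⟨y, hyS⟩ c := by
    rintro ⟨c, hc⟩
    obtain ⟨p⟩ := mem_sideF.1 hc
    have hsupp : ∀ u ∈ (p.mapLe (deleteEdges_le _)).support, u ∈ S := by
      intro u hu
      rw [Walk.support_map] at hu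
      simp only [List.mem_map] at hu
      obtain ⟨u', hu', rfl⟩ := hu
      exact mem_sideF_of_mem_support p hu'
    exact induce_reachable_of_walk (p.mapLe (deleteEdges_le _)) hsupp
  have hHconn : H.Connected := by
    have : Nonempty S := ⟨⟨y, hyS⟩⟩
    exact ⟨fun a b => (hreach a).symm.trans (hreach b)⟩
  have hHtree : H.IsTree := ⟨hHconn, hHac⟩
  have hedge : H.edgeFinset.card + 1 = Fintype.card S := hHtree.card_edgeFinset
  have hcardS : Fintype.card S = (sideF T x y).card := Fintype.card_coe _
  have hdeg : ∀ u : S, H.degree u = (sideF T x y ∩ T.neighborFinset (u : V)).card := by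
    rintro ⟨u, hu⟩
    rw [SimpleGraph.degree]
    refine Finset.card_bij (fun j _ => (j : V)) ?_ ?_ ?_
    · rintro ⟨j, hj⟩ hmem
      rw [mem_neighborFinset] at hmem
      have : T.Adj u j := by simpa [hH] using hmem
      exact Finset.mem_inter.2 ⟨hj, (mem_neighborFinset _ _ _).2 this⟩
    · rintro ⟨j1, _⟩ _ ⟨j2, _⟩ _ h
      exact Subtype.ext h
    · intro j hj
      rw [Finset.mem_inter, mem_neighborFinset] at hj
      refine ⟨⟨j, hj.1⟩, ?_, rfl⟩
      rw [mem_neighborFinset]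
      simpa [hH] using hj.2
  have hsum : ∑ u : S, H.degree u = 2 * H.edgeFinset.card :=
    H.sum_degrees_eq_twice_card_edges
  have hsum2 : ∑ u : S, H.degree u = ∑ i ∈ sideF T x y, (sideF T x y ∩ T.neighborFinset i).card := by
    rw [← Finset.sum_coe_sort (sideF T x y) (fun i => (sideF T x y ∩ T.neighborFinset i).card)]
    exact Finset.sum_congr rfl fun u _ => hdeg u
  have hymem : y ∈ sideF T x y := sideF_self T x y
  have hA1 : ∑ i ∈ (sideF T x y).erase y, T.degree i + T.degree y = ∑ i ∈ sideF T x y, T.degree i :=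
    Finset.sum_erase_add _ _ hymem
  have hA1' : ∑ i ∈ (sideF T x y).erase y, (sideF T x y ∩ T.neighborFinset i).card
      + (sideF T x y ∩ T.neighborFinset y).card
      = ∑ i ∈ sideF T x y, (sideF T x y ∩ T.neighborFinset i).card :=
    Finset.sum_erase_add _ _ hymem
  have hcongr : ∑ i ∈ (sideF T x y).erase y, (sideF T x y ∩ T.neighborFinset i).card
      = ∑ i ∈ (sideF T x y).erase y, T.degree i := by
    refine Finset.sum_congr rfl fun i hi => ?_
    rw [Finset.mem_erase] at hi
    rw [side_inter_nbr_of_mem hT.IsAcyclic hadj hi.2 hi.1]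
    rfl
  have hyc : (sideF T x y ∩ T.neighborFinset y).card = T.degree y - 1 := by
    rw [side_inter_nbr_y hT.IsAcyclic hadj,
      Finset.card_erase_of_mem ((mem_neighborFinset _ _ _).2 hadj.symm)]
    rfl
  have hdegy : 1 ≤ T.degree y := (T.degree_pos_iff_exists_adj y).2 ⟨x, hadj.symm⟩
  omega


lemma deg_mul_transP {T : SimpleGraph V} (i k : V) :
    (T.degree i : ℝ) * transP T i k = if T.Adj i k then 1 else 0 := by
  unfold transP
  split_ifs with h
  · have hd : (T.degree i : ℝ) ≠ 0 := by
      have := (T.degree_pos_iff_exists_adj i).2 ⟨k, h⟩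
      positivity
    field_simp
  · ring

lemma scaled_recurrence {T : SimpleGraph V} {M : V → V → ℝ} (hM : IsMFPT T M) {i j : V}
    (hij : i ≠ j) :
    (T.degree i : ℝ) * M i j = (T.degree i : ℝ) + ∑ k ∈ T.neighborFinset i, M k j := by
  rw [hM.2 i j hij, mul_add, mul_one, Finset.mul_sum]
  congr 1
  have : ∀ k, (T.degree i : ℝ) * (transP T i k * M k j) = if k ∈ T.neighborFinset i then M k j else 0 := by
    intro k
    rw [← mul_assoc, deg_mul_transP]
    by_cases h : T.Adj i k
    · rw [if_pos h, if_pos ((mem_neighborFinset _ _ _).2 h), one_mul]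
    · rw [if_neg h, if_neg (fun hc => h ((mem_neighborFinset _ _ _).1 hc)), zero_mul]
  rw [Finset.sum_congr rfl (fun k _ => this k), Finset.sum_ite_mem, Finset.univ_inter]

lemma transP_rowsum {T : SimpleGraph V} {i : V} (hdeg : 0 < T.degree i) :
    ∑ k, transP T i k = 1 := by
  have : ∀ k, transP T i k = if k ∈ T.neighborFinset i then (1:ℝ) / T.degree i else 0 := by
    intro k
    unfold transP
    by_cases h : T.Adj i k
    · rw [if_pos h, if_pos ((mem_neighborFinset _ _ _).2 h)]
    · rw [if_neg h, if_neg (fun hc => h ((mem_neighborFinset _ _ _).1 hc))]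
  rw [Finset.sum_congr rfl (fun k _ => this k), Finset.sum_ite_mem, Finset.univ_inter,
    Finset.sum_const, SimpleGraph.degree]
  have hd : (T.degree i : ℝ) ≠ 0 := Nat.cast_ne_zero.2 hdeg.ne'
  rw [nsmul_eq_mul]
  field_simp
  exact div_self hd

lemma hit_edge {M : V → V → ℝ} (hT : T.IsTree) (hM : IsMFPT T M) (hadj : T.Adj x y) :
    M y x = ∑ i ∈ sideF T x y, (T.degree i : ℝ) := by
  classical
  set B := sideF T x y with hB
  have hxB : x ∉ B := not_mem_sideF hT.IsAcyclic hadj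
  have hyB : y ∈ B := sideF_self T x y
  -- sum the scaled recurrence over B
  have step1 : ∑ i ∈ B, (T.degree i : ℝ) * M i x
      = ∑ i ∈ B, (T.degree i : ℝ) + ∑ i ∈ B, ∑ k ∈ T.neighborFinset i, M k x := by
    rw [← Finset.sum_add_distrib]
    refine Finset.sum_congr rfl fun i hi => ?_
    exact scaled_recurrence hM (fun h => hxB (h ▸ hi))
  -- swap the double sum
  have step2 : ∑ i ∈ B, ∑ k ∈ T.neighborFinset i, M k x
      = ∑ k, ((B ∩ T.neighborFinset k).card : ℝ) * M k x := by
    have e1 : ∀ i, ∑ k ∈ T.neighborFinset i, M k x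
        = ∑ k, if k ∈ T.neighborFinset i then M k x else 0 := by
      intro i
      rw [Finset.sum_ite_mem, Finset.univ_inter]
    rw [Finset.sum_congr rfl (fun i _ => e1 i), Finset.sum_comm]
    refine Finset.sum_congr rfl fun k _ => ?_
    calc ∑ i ∈ B, (if k ∈ T.neighborFinset i then M k x else 0)
        = ∑ i ∈ B, (if i ∈ T.neighborFinset k then M k x else 0) := by
          refine Finset.sum_congr rfl fun i _ => ?_
          by_cases h : T.Adj i k
          · rw [if_pos ((mem_neighborFinset _ _ _).2 h), if_pos ((mem_neighborFinset _ _ _).2 h.symm)]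
          · rw [if_neg (fun hc => h ((mem_neighborFinset _ _ _).1 hc)),
              if_neg (fun hc => h (((mem_neighborFinset _ _ _).1 hc).symm))]
      _ = ∑ i ∈ B ∩ T.neighborFinset k, M k x := by rw [Finset.sum_ite_mem]
      _ = ((B ∩ T.neighborFinset k).card : ℝ) * M k x := by
          rw [Finset.sum_const, nsmul_eq_mul]
  -- evaluate the coefficient sum
  have step3 : ∑ k, ((B ∩ T.neighborFinset k).card : ℝ) * M k x
      = ∑ k ∈ B, (T.degree k : ℝ) * M k x - M y x := by
    rw [← Finset.sum_filter_add_sum_filter_not Finset.univ (· ∈ B)]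
    have hfil : Finset.univ.filter (· ∈ B) = B := by
      ext i; simp
    have hout : ∑ k ∈ Finset.univ.filter (¬ · ∈ B), ((B ∩ T.neighborFinset k).card : ℝ) * M k x = 0 := by
      refine Finset.sum_eq_zero fun k hk => ?_
      rw [Finset.mem_filter] at hk
      by_cases hkx : k = x
      · rw [hkx, hB, side_inter_nbr_x hT.IsAcyclic hadj]
        simp [hM.1 x]
      · rw [hB, side_inter_nbr_of_not_mem hT.IsAcyclic hadj hk.2 hkx]
        simp
    rw [hfil, hout, add_zero]
    have hin : ∑ k ∈ B, ((B ∩ T.neighborFinset k).card : ℝ) * M k x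
        = ∑ k ∈ B.erase y, ((B ∩ T.neighborFinset k).card : ℝ) * M k x
          + ((B ∩ T.neighborFinset y).card : ℝ) * M y x :=
      (Finset.sum_erase_add _ _ hyB).symm
    have hin2 : ∑ k ∈ B.erase y, ((B ∩ T.neighborFinset k).card : ℝ) * M k x
        = ∑ k ∈ B.erase y, (T.degree k : ℝ) * M k x := by
      refine Finset.sum_congr rfl fun k hk => ?_
      rw [Finset.mem_erase] at hk
      rw [hB, side_inter_nbr_of_mem hT.IsAcyclic hadj hk.2 hk.1]
      rfl
    have hycard : ((B ∩ T.neighborFinset y).card : ℝ) = (T.degree y : ℝ) - 1 := by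
      rw [hB, side_inter_nbr_y hT.IsAcyclic hadj,
        Finset.card_erase_of_mem ((mem_neighborFinset _ _ _).2 hadj.symm)]
      have h1 : 1 ≤ T.degree y := (T.degree_pos_iff_exists_adj y).2 ⟨x, hadj.symm⟩
      have hdd : #(T.neighborFinset y) = T.degree y := rfl
      rw [hdd, Nat.cast_sub h1, Nat.cast_one]
    have hback : ∑ k ∈ B.erase y, (T.degree k : ℝ) * M k x + (T.degree y : ℝ) * M y x
        = ∑ k ∈ B, (T.degree k : ℝ) * M k x := Finset.sum_erase_add _ _ hyB
    rw [hin, hin2, hycard, ← hback]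
    ring
  have := step1
  rw [step2, step3] at this
  linarith

lemma harmonic_le_zero {T : SimpleGraph V} (hconn : T.Connected) {S : Finset V} {h : V → ℝ}
    {y : V} (hy : y ∈ S) (h0 : h y = 0)
    (harm : ∀ i ∈ S, i ≠ y → h i = ∑ k, transP T i k * h k)
    (hdeg : ∀ i ∈ S, 0 < T.degree i)
    (hcl : ∀ i ∈ S, i ≠ y → ∀ k, T.Adj i k → k ∈ S) :
    ∀ i ∈ S, h i ≤ 0 := by
  have hne : S.Nonempty := ⟨y, hy⟩
  set c := S.sup' hne h with hc
  have hub : ∀ i ∈ S, h i ≤ c := fun i hi => Finset.le_sup' h hi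
  obtain ⟨i0, hi0, hmax⟩ := Finset.exists_mem_eq_sup' hne h
  suffices hcle : c ≤ 0 by intro i hi; exact (hub i hi).trans hcle
  have prop : ∀ {a b : V} (p : T.Walk a b), b = y → a ∈ S → h a = c → c ≤ 0 := by
    intro a b p
    induction p with
    | nil =>
      rintro rfl _ hic
      rw [← hic, h0]
    | @cons i u b hadj q ih =>
      rintro rfl hi hic
      by_cases hiy : i = b
      · rw [← hic, hiy, h0]
      · have h1 := harm i hi hiy
        have hkle : ∀ k ∈ Finset.univ, transP T i k * h k ≤ transP T i k * c := by
          intro k _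
          by_cases hadjk : T.Adj i k
          · have hkS : k ∈ S := hcl i hi hiy k hadjk
            have hP : 0 ≤ transP T i k := by
              unfold transP; rw [if_pos hadjk]; positivity
            exact mul_le_mul_of_nonneg_left (hub k hkS) hP
          · unfold transP; rw [if_neg hadjk]; simp
        have hsum1 : ∑ k, transP T i k * c = c := by
          rw [← Finset.sum_mul, transP_rowsum (hdeg i hi), one_mul]
        have heq : ∑ k, transP T i k * h k = ∑ k, transP T i k * c :=
          (h1.symm.trans hic).trans hsum1.symm
        have hall := (Finset.sum_eq_sum_iff_of_le hkle).1 heq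
        have hu := hall u (Finset.mem_univ u)
        have hP : 0 < transP T i u := by
          unfold transP
          rw [if_pos hadj]
          have := hdeg i hi
          positivity
        have huc : h u = c := mul_left_cancel₀ hP.ne' hu
        exact ih rfl (hcl i hi hiy u hadj) huc
  obtain ⟨p⟩ := hconn.preconnected i0 y
  exact prop p rfl hi0 hmax.symm

lemma harmonic_eq_zero {T : SimpleGraph V} (hconn : T.Connected) {S : Finset V} {h : V → ℝ}
    {y : V} (hy : y ∈ S) (h0 : h y = 0)
    (harm : ∀ i ∈ S, i ≠ y → h i = ∑ k, transP T i k * h k)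
    (hdeg : ∀ i ∈ S, 0 < T.degree i)
    (hcl : ∀ i ∈ S, i ≠ y → ∀ k, T.Adj i k → k ∈ S) :
    ∀ i ∈ S, h i = 0 := by
  have hle := harmonic_le_zero hconn hy h0 harm hdeg hcl
  have hge := harmonic_le_zero hconn (h := fun i => -h i) hy (by simp [h0])
    (fun i hi hiy => by
      simp only [mul_neg, Finset.sum_neg_distrib, neg_inj]
      exact harm i hi hiy) hdeg hcl
  intro i hi
  have h1 := hle i hi
  have h2 := hge i hi
  simp only [neg_nonpos] at h2
  linarith

lemma hit_decomp {T : SimpleGraph V} {x y : V} {M : V → V → ℝ} (hT : T.IsTree)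
    (hM : IsMFPT T M) (hadj : T.Adj x y) :
    ∀ i ∈ sideF T x y, M i x = M i y + M y x := by
  have hxB : x ∉ sideF T x y := not_mem_sideF hT.IsAcyclic hadj
  have hdeg : ∀ i ∈ sideF T x y, 0 < T.degree i := by
    intro i hi
    have hix : i ≠ x := by rintro rfl; exact hxB hi
    exact degree_pos_of_connected hT.isConnected hix
  have key := harmonic_eq_zero (h := fun i => M i x - M i y - M y x) hT.isConnected
    (sideF_self T x y) (by simp [hM.1 y])
    (fun i hi hiy => by
      have hix : i ≠ x := by rintro rfl; exact hxB hi
      have e1 := hM.2 i x hix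
      have e2 := hM.2 i y hiy
      have rows := transP_rowsum (hdeg i hi)
      have hs : ∑ k, transP T i k * (M k x - M k y - M y x)
          = (∑ k, transP T i k * M k x) - (∑ k, transP T i k * M k y)
            - (∑ k, transP T i k) * M y x := by
        rw [Finset.sum_mul, ← Finset.sum_sub_distrib, ← Finset.sum_sub_distrib]
        exact Finset.sum_congr rfl fun k _ => by ring
      rw [hs, rows, e1, e2]
      ring)
    hdeg
    (fun i hi hiy k hk => sideF_closure hT.IsAcyclic hadj hi hk (fun hc => hiy hc.1))
  intro i hi
  have := key i hi
  linarith

lemma acc_total {T : SimpleGraph V} {M : V → V → ℝ} (hM : IsMFPT T M) (v : V) :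
    acc T M v = ∑ i, statPi T i * M i v := by
  unfold acc
  rw [← Finset.sum_filter_add_sum_filter_not Finset.univ (· ≠ v) (fun i => statPi T i * M i v)]
  have h2 : Finset.univ.filter (fun i => ¬ i ≠ v) = {v} := by
    ext i; simp
  rw [h2, Finset.sum_singleton, hM.1 v, mul_zero, add_zero]

lemma side_union {T : SimpleGraph V} (hT : T.IsTree) {x y : V} (hadj : T.Adj x y) :
    sideF T y x ∪ sideF T x y = Finset.univ ∧ Disjoint (sideF T y x) (sideF T x y) := by
  constructor
  · ext i
    simp only [Finset.mem_union, Finset.mem_univ, iff_true]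
    exact sideF_cover hT.isConnected i
  · rw [Finset.disjoint_left]
    intro i hi1 hi2
    exact sideF_disjoint hT.IsAcyclic hadj hi2 hi1

lemma acc_sub_edge {T : SimpleGraph V} {x y : V} {M : V → V → ℝ} (hT : T.IsTree)
    (hM : IsMFPT T M) (hadj : T.Adj x y) :
    acc T M x - acc T M y
      = ((∑ i ∈ sideF T x y, (T.degree i : ℝ))^2 - (∑ i ∈ sideF T y x, (T.degree i : ℝ))^2)
        / (2 * (T.edgeFinset.card : ℝ)) := by
  obtain ⟨hcover, hdisj⟩ := side_union hT hadj
  set A := sideF T y x with hA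
  set B := sideF T x y with hB
  have hsplit : ∀ f : V → ℝ, ∑ i, f i = ∑ i ∈ A, f i + ∑ i ∈ B, f i := by
    intro f
    rw [← Finset.sum_union hdisj, hcover]
  have hdecB : ∀ i ∈ B, M i x = M i y + M y x := hit_decomp hT hM hadj
  have hdecA : ∀ i ∈ A, M i y = M i x + M x y := hit_decomp hT hM hadj.symm
  have hx : acc T M x = ∑ i ∈ A, statPi T i * M i x
      + (∑ i ∈ B, statPi T i * M i y + (∑ i ∈ B, statPi T i) * M y x) := by
    rw [acc_total hM, hsplit]
    congr 1
    rw [Finset.sum_mul, ← Finset.sum_add_distrib]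
    exact Finset.sum_congr rfl fun i hi => by rw [hdecB i hi]; ring
  have hy : acc T M y = ∑ i ∈ B, statPi T i * M i y
      + (∑ i ∈ A, statPi T i * M i x + (∑ i ∈ A, statPi T i) * M x y) := by
    rw [acc_total hM, hsplit, add_comm]
    congr 1
    rw [Finset.sum_mul, ← Finset.sum_add_distrib]
    exact Finset.sum_congr rfl fun i hi => by rw [hdecA i hi]; ring
  have hMyx : M y x = ∑ i ∈ B, (T.degree i : ℝ) := hit_edge hT hM hadj
  have hMxy : M x y = ∑ i ∈ A, (T.degree i : ℝ) := hit_edge hT hM hadj.symm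
  have hpiB : ∑ i ∈ B, statPi T i = (∑ i ∈ B, (T.degree i : ℝ)) / (2 * (T.edgeFinset.card : ℝ)) := by
    unfold statPi
    rw [Finset.sum_div]
  have hpiA : ∑ i ∈ A, statPi T i = (∑ i ∈ A, (T.degree i : ℝ)) / (2 * (T.edgeFinset.card : ℝ)) := by
    unfold statPi
    rw [Finset.sum_div]
  rw [hx, hy, hpiA, hpiB, hMyx, hMxy]
  ring

lemma edge_card_pos {T : SimpleGraph V} {x y : V} (hadj : T.Adj x y) :
    0 < T.edgeFinset.card := by
  refine Finset.card_pos.2 ⟨s(x,y), ?_⟩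
  rw [mem_edgeFinset]
  exact hadj

lemma sum_deg_facts {T : SimpleGraph V} {x y : V} (hT : T.IsTree) (hadj : T.Adj x y) :
    (∑ i ∈ sideF T x y, T.degree i) + 1 = 2 * (sideF T x y).card
    ∧ (∑ i ∈ sideF T y x, T.degree i) + 1 = 2 * (sideF T y x).card
    ∧ (∑ i ∈ sideF T y x, T.degree i) + (∑ i ∈ sideF T x y, T.degree i)
        = 2 * T.edgeFinset.card
    ∧ T.edgeFinset.card + 1 = Fintype.card V := by
  refine ⟨sum_deg_sideF hT hadj, sum_deg_sideF hT hadj.symm, ?_, hT.card_edgeFinset⟩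
  obtain ⟨hcover, hdisj⟩ := side_union hT hadj
  rw [← Finset.sum_union hdisj, hcover]
  exact T.sum_degrees_eq_twice_card_edges

lemma acc_le_edge {T : SimpleGraph V} {x y : V} {M : V → V → ℝ} (hT : T.IsTree)
    (hM : IsMFPT T M) (hadj : T.Adj x y)
    (hle : 2 * (sideF T x y).card ≤ Fintype.card V) : acc T M x ≤ acc T M y := by
  obtain ⟨h1, h2, h3, h4⟩ := sum_deg_facts hT hadj
  have hEpos := edge_card_pos hadj
  have hBA : (∑ i ∈ sideF T x y, T.degree i) ≤ (∑ i ∈ sideF T y x, T.degree i) := by omega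
  have hkey := acc_sub_edge hT hM hadj
  have hBr : (0:ℝ) ≤ ∑ i ∈ sideF T x y, (T.degree i : ℝ) :=
    Finset.sum_nonneg fun i _ => Nat.cast_nonneg _
  have hBAr : (∑ i ∈ sideF T x y, (T.degree i : ℝ)) ≤ ∑ i ∈ sideF T y x, (T.degree i : ℝ) := by
    push_cast [← Nat.cast_sum]
    exact_mod_cast hBA
  have hnum : (∑ i ∈ sideF T x y, (T.degree i : ℝ))^2
      - (∑ i ∈ sideF T y x, (T.degree i : ℝ))^2 ≤ 0 := by nlinarith
  have hden : (0:ℝ) < 2 * (T.edgeFinset.card : ℝ) := by positivity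
  have : acc T M x - acc T M y ≤ 0 := by
    rw [hkey]
    exact div_nonpos_iff.2 (Or.inr ⟨hnum, le_of_lt hden⟩)
  linarith

lemma acc_lt_edge {T : SimpleGraph V} {x y : V} {M : V → V → ℝ} (hT : T.IsTree)
    (hM : IsMFPT T M) (hadj : T.Adj x y)
    (hlt : Fintype.card V < 2 * (sideF T x y).card) : acc T M y < acc T M x := by
  obtain ⟨h1, h2, h3, h4⟩ := sum_deg_facts hT hadj
  have hEpos := edge_card_pos hadj
  have hBA : (∑ i ∈ sideF T y x, T.degree i) < (∑ i ∈ sideF T x y, T.degree i) := by omega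
  have hkey := acc_sub_edge hT hM hadj
  have hAr : (0:ℝ) ≤ ∑ i ∈ sideF T y x, (T.degree i : ℝ) :=
    Finset.sum_nonneg fun i _ => Nat.cast_nonneg _
  have hBAr : (∑ i ∈ sideF T y x, (T.degree i : ℝ)) < ∑ i ∈ sideF T x y, (T.degree i : ℝ) := by
    push_cast [← Nat.cast_sum]
    exact_mod_cast hBA
  have hnum : (0:ℝ) < (∑ i ∈ sideF T x y, (T.degree i : ℝ))^2
      - (∑ i ∈ sideF T y x, (T.degree i : ℝ))^2 := by nlinarith
  have hden : (0:ℝ) < 2 * (T.edgeFinset.card : ℝ) := by positivity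
  have : 0 < acc T M x - acc T M y := by
    rw [hkey]
    exact div_pos hnum hden
  linarith

lemma del_reachable_of_walk {T : SimpleGraph V} {v z a b : V} (q : T.Walk a b)
    (hv : v ∉ q.support) : (T.deleteEdges {s(v,z)}).Reachable a b := by
  refine ⟨q.toDeleteEdges _ ?_⟩
  intro e he hes
  rw [Set.mem_singleton_iff] at hes
  subst hes
  exact hv (q.fst_mem_support_of_mem_edges he)

lemma side_mem_ne {T : SimpleGraph V} (hT : T.IsTree) {x y v i : V} (hadj : T.Adj x y)
    (hv : v ∈ sideF T y x) (hi : i ∈ sideF T x y) : i ≠ v := by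
  rintro rfl
  exact sideF_disjoint hT.IsAcyclic hadj hi hv

lemma side_card_le_supp {T : SimpleGraph V} (hT : T.IsTree) {x y v : V} (hadj : T.Adj x y)
    (hv : v ∈ sideF T y x) :
    ∃ w : {u : V // u ≠ v},
      (sideF T x y).card
        ≤ (((SimpleGraph.induce {u : V | u ≠ v} T).connectedComponentMk w).supp).ncard := by
  have hyv : y ≠ v := side_mem_ne hT hadj hv (sideF_self T x y)
  refine ⟨⟨y, hyv⟩, ?_⟩
  set Sv : Set V := {u : V | u ≠ v} with hSv
  set C := (SimpleGraph.induce Sv T).connectedComponentMk ⟨y, hyv⟩ with hC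
  set s : Set {u : V // u ≠ v} := {a | (a : V) ∈ sideF T x y} with hs
  have hsub : s ⊆ C.supp := by
    intro a ha
    rw [SimpleGraph.ConnectedComponent.mem_supp_iff]
    refine SimpleGraph.ConnectedComponent.sound ?_
    obtain ⟨p⟩ := mem_sideF.1 ha
    have hsupp : ∀ u ∈ (p.mapLe (deleteEdges_le _)).support, u ∈ Sv := by
      intro u hu
      rw [SimpleGraph.Walk.support_map] at hu
      simp only [List.mem_map] at hu
      obtain ⟨u', hu', rfl⟩ := hu
      exact side_mem_ne hT hadj hv (mem_sideF_of_mem_support p hu')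
    have := induce_reachable_of_walk (S := Sv) (p.mapLe (deleteEdges_le _)) hsupp
    exact (Reachable.symm this)
  have hval : Subtype.val '' s = ↑(sideF T x y) := by
    ext j
    constructor
    · rintro ⟨⟨j', hj'⟩, hmem, rfl⟩
      exact hmem
    · intro hj
      exact ⟨⟨j, side_mem_ne hT hadj hv hj⟩, hj, rfl⟩
  have h1 : (sideF T x y).card = s.ncard := by
    rw [← Set.ncard_coe_finset, ← hval, Set.ncard_image_of_injective _ Subtype.val_injective]
  rw [h1]
  exact Set.ncard_le_ncard hsub (Set.toFinite _)

lemma supp_card_le_side {T : SimpleGraph V} (hT : T.IsTree) {v : V} (w : {u : V // u ≠ v}) :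
    ∃ z, T.Adj v z ∧
      (((SimpleGraph.induce {u : V | u ≠ v} T).connectedComponentMk w).supp).ncard
        ≤ (sideF T v z).card := by
  obtain ⟨p0⟩ := hT.isConnected.preconnected (w : V) v
  have hp : (p0.toPath : T.Walk (w : V) v).IsPath := p0.toPath.2
  set pr := (p0.toPath : T.Walk (w : V) v).reverse with hpr
  have hprP : pr.IsPath := hp.reverse
  obtain ⟨z, hvz, r, hre⟩ := SimpleGraph.Walk.exists_eq_cons_of_ne (Ne.symm w.2) pr
  have hrP : r.IsPath ∧ v ∉ r.support := by
    have := hprP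
    rw [hre, SimpleGraph.Walk.cons_isPath_iff] at this
    exact ⟨this.1, this.2⟩
  refine ⟨z, hvz, ?_⟩
  have hwB : (w : V) ∈ sideF T v z :=
    mem_sideF.2 (del_reachable_of_walk r hrP.2)
  set Sv : Set V := {u : V | u ≠ v} with hSv
  set s : Set {u : V // u ≠ v} := {a | (a : V) ∈ sideF T v z} with hs
  have hsub : (((SimpleGraph.induce Sv T).connectedComponentMk w).supp) ⊆ s := by
    intro a ha
    rw [SimpleGraph.ConnectedComponent.mem_supp_iff] at ha
    have hreach := SimpleGraph.ConnectedComponent.exact ha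
    obtain ⟨q⟩ := hreach
    have hq : ((q.map (SimpleGraph.Embedding.induce (G := T) Sv).toHom) : T.Walk (a : V) (w : V)) = _ := rfl
    have hvnot : v ∉ (q.map (SimpleGraph.Embedding.induce (G := T) Sv).toHom).support := by
      rw [SimpleGraph.Walk.support_map]
      simp only [List.mem_map]
      rintro ⟨u', _, hu'⟩
      exact u'.2 hu'
    have hdel : (T.deleteEdges {s(v,z)}).Reachable (a : V) (w : V) :=
      del_reachable_of_walk _ hvnot
    have : (T.deleteEdges {s(v,z)}).Reachable z (a : V) :=
      (mem_sideF.1 hwB).trans hdel.symm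
    exact mem_sideF.2 this
  have h2 : s.ncard ≤ (sideF T v z).card := by
    rw [← Set.ncard_coe_finset]
    have himg : Subtype.val '' s ⊆ ↑(sideF T v z) := by
      rintro j ⟨⟨j', hj'⟩, hmem, rfl⟩
      exact hmem
    calc s.ncard = (Subtype.val '' s).ncard :=
          (Set.ncard_image_of_injective _ Subtype.val_injective).symm
      _ ≤ _ := Set.ncard_le_ncard himg (Set.toFinite _)
  exact le_trans (Set.ncard_le_ncard hsub (Set.toFinite _)) h2

end Aux

/-- a vertex of a tree is a centroid iff its accessibility index
`α_T(v)` for the simple random walk is minimal among all vertices. -/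
theorem tree_centroid_iff_acc_min {V : Type*} [Fintype V] (T : SimpleGraph V)
    (hT : T.IsTree) (M : V → V → ℝ) (hM : IsMFPT T M) (v : V) :
    IsCentroid T v ↔ ∀ w : V, acc T M v ≤ acc T M w := by
  by_cases hcard : Fintype.card V ≤ 1
  · have hsub : Subsingleton V := Fintype.card_le_one_iff_subsingleton.1 hcard
    constructor
    · intro _ w
      rw [Subsingleton.elim w v]
    · rintro _ ⟨u, hu⟩
      exact absurd (Subsingleton.elim u v) hu
  · push_neg at hcard
    constructor
    · intro hcent w
      have claim : ∀ {a b : V} (p : T.Walk a b), p.IsPath → b = v → acc T M v ≤ acc T M a := by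
        intro a b p
        induction p with
        | nil => rintro _ rfl; exact le_refl _
        | @cons a u b hadj q ih =>
          rintro hp rfl
          have hq : q.IsPath := hp.of_cons
          have h1 : acc T M b ≤ acc T M u := ih hq rfl
          have hanotin : a ∉ q.support := ((SimpleGraph.Walk.cons_isPath_iff hadj q).1 hp).2
          have hvside : b ∈ sideF T a u :=
            mem_sideF.2 (del_reachable_of_walk q hanotin)
          obtain ⟨w', hw'⟩ := side_card_le_supp hT hadj.symm hvside
          have hb := hcent w'
          have hsize : 2 * (sideF T u a).card ≤ Fintype.card V := by omega
          exact h1.trans (acc_le_edge hT hM hadj.symm hsize)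
      obtain ⟨p0⟩ := hT.isConnected.preconnected w v
      exact claim (p0.toPath : T.Walk w v) p0.toPath.2 rfl
    · intro hmin w
      by_contra hgt
      push_neg at hgt
      obtain ⟨z, hvz, hle⟩ := supp_card_le_side hT w
      have h2 : Fintype.card V < 2 * (sideF T v z).card := by omega
      exact absurd (hmin z) (not_le.2 (acc_lt_edge hT hM hvz h2))
end

section
/- For the simple random walk on a connected graph G with transition matrix P and stationary distribution π, the quantity Σ_{j ≠ i} π_j m_{i,j} is independent of the starting vertex i (Kemeny's constant), where m_{i,j} are the mean first passage times. -/
open SimpleGraph Finset Matrix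
open scoped Classical

section KemenyAux

variable {V : Type*} [Fintype V] {G : SimpleGraph V}

private lemma KI_deg_pos [Nontrivial V] (hG : G.Connected) (v : V) : 0 < G.degree v := by
  classical
  obtain ⟨w, hw⟩ := exists_ne v
  obtain ⟨p⟩ := hG.preconnected v w
  rw [SimpleGraph.degree_pos_iff_exists_adj]
  cases p with
  | nil => exact absurd rfl hw
  | cons h _ => exact ⟨_, h⟩

private lemma KI_filter_eq (v : V) : (Finset.univ.filter (· ≠ v) : Finset V) = Finset.univ.erase v := by
  ext x; simp [Finset.mem_erase, and_comm]

private lemma KI_transP_nonneg (v k : V) : 0 ≤ transP G v k := by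
  unfold transP; split
  · positivity
  · exact le_rfl

private lemma KI_sumP [Nontrivial V] (hG : G.Connected) (v : V) : ∑ k, transP G v k = 1 := by
  classical
  have hd := KI_deg_pos hG v
  unfold transP
  rw [Finset.sum_ite, Finset.sum_const, Finset.sum_const_zero, add_zero]
  have hfil : (Finset.univ.filter (fun k => G.Adj v k) : Finset V) = G.neighborFinset v := by
    rw [SimpleGraph.neighborFinset_eq_filter]
  rw [hfil, SimpleGraph.card_neighborFinset_eq_degree, nsmul_eq_mul]
  have : (G.degree v : ℝ) ≠ 0 := by positivity
  field_simp

private lemma KI_sumPi [Nontrivial V] (hG : G.Connected) : ∑ j, statPi G j = 1 := by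
  classical
  unfold statPi
  rw [← Finset.sum_div]
  have h2m : (∑ j, (G.degree j : ℝ)) = 2 * G.edgeFinset.card := by
    rw [← Nat.cast_sum]
    norm_cast
    exact G.sum_degrees_eq_twice_card_edges
  rw [h2m]
  have hpos : (0:ℝ) < 2 * G.edgeFinset.card := by
    have := KI_deg_pos hG (Classical.arbitrary V)
    have h2m' : ∑ v, G.degree v = 2 * G.edgeFinset.card := G.sum_degrees_eq_twice_card_edges
    have : 0 < ∑ v, G.degree v :=
      Finset.sum_pos (fun v _ => KI_deg_pos hG v) ⟨Classical.arbitrary V, Finset.mem_univ _⟩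
    rw [h2m'] at this
    exact_mod_cast this
  exact div_self (ne_of_gt hpos)

private lemma KI_piP [Nontrivial V] (hG : G.Connected) (k : V) :
    ∑ i, statPi G i * transP G i k = statPi G k := by
  classical
  have hterm : ∀ i, statPi G i * transP G i k =
      if G.Adj k i then (1:ℝ) / (2 * (G.edgeFinset.card:ℝ)) else 0 := by
    intro i
    unfold statPi transP
    by_cases h : G.Adj i k
    · rw [if_pos h, if_pos h.symm]
      have : (G.degree i : ℝ) ≠ 0 := by
        have := KI_deg_pos hG i; positivity
      rw [div_mul_div_comm, mul_one, mul_comm (2 * (G.edgeFinset.card:ℝ)), ← div_div,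
        div_self this]
    · rw [if_neg h, if_neg (fun h' => h h'.symm), mul_zero]
  simp only [hterm]
  rw [Finset.sum_ite, Finset.sum_const, Finset.sum_const_zero, add_zero]
  have hfil : (Finset.univ.filter (fun i => G.Adj k i) : Finset V) = G.neighborFinset k := by
    rw [SimpleGraph.neighborFinset_eq_filter]
  rw [hfil, SimpleGraph.card_neighborFinset_eq_degree, nsmul_eq_mul]
  unfold statPi
  ring

end KemenyAux

/-- `∑_{j ≠ i} π_j m_{i,j}` is independent of the starting vertex `i`
(Kemeny's constant). -/
theorem kemeny_independent {V : Type*} [Fintype V] (G : SimpleGraph V)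
    (hG : G.Connected) (M : V → V → ℝ) (hM : IsMFPT G M) (i i' : V) :
    ∑ j ∈ Finset.univ.filter (· ≠ i), statPi G j * M i j =
      ∑ j ∈ Finset.univ.filter (· ≠ i'), statPi G j * M i' j := by
  classical
  rcases subsingleton_or_nontrivial V with h | h
  · rw [Subsingleton.elim i i']
  obtain ⟨hMdiag, hMrec⟩ := hM
  set K : V → ℝ := fun v => ∑ j, statPi G j * M v j with hKdef
  have hfilter : ∀ v : V, ∑ j ∈ Finset.univ.filter (· ≠ v), statPi G j * M v j = K v := by
    intro v
    rw [KI_filter_eq v]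
    exact Finset.sum_erase _ (by simp [hMdiag])
  have hret : ∀ j : V, statPi G j * (∑ k, transP G j k * M k j) = 1 - statPi G j := by
    intro j
    have h1 : ∑ x, statPi G x * M x j
        = ∑ x ∈ Finset.univ.erase j, statPi G x * M x j :=
      (Finset.sum_erase _ (by simp [hMdiag])).symm
    have h2 : ∑ x ∈ Finset.univ.erase j, statPi G x * M x j
        = ∑ x ∈ Finset.univ.erase j,
            (statPi G x + statPi G x * ∑ k, transP G x k * M k j) := by
      refine Finset.sum_congr rfl fun x hx => ?_
      rw [hMrec x j (Finset.ne_of_mem_erase hx), mul_add, mul_one]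
    have h3 : ∑ x ∈ Finset.univ.erase j, statPi G x = 1 - statPi G j := by
      rw [Finset.sum_erase_eq_sub (Finset.mem_univ j), KI_sumPi hG]
    have h4 : ∑ x ∈ Finset.univ.erase j, statPi G x * (∑ k, transP G x k * M k j)
        = (∑ x, statPi G x * (∑ k, transP G x k * M k j))
          - statPi G j * (∑ k, transP G j k * M k j) :=
      Finset.sum_erase_eq_sub (Finset.mem_univ j)
    have h5 : ∑ x, statPi G x * (∑ k, transP G x k * M k j) = ∑ x, statPi G x * M x j := by
      calc ∑ x, statPi G x * ∑ k, transP G x k * M k j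
          = ∑ x, ∑ k, statPi G x * transP G x k * M k j := by
            simp [Finset.mul_sum, mul_assoc]
        _ = ∑ k, ∑ x, statPi G x * transP G x k * M k j := Finset.sum_comm
        _ = ∑ k, (∑ x, statPi G x * transP G x k) * M k j := by
            simp [Finset.sum_mul]
        _ = ∑ k, statPi G k * M k j := by
            simp only [KI_piP hG]
    have hcomb := h1.trans h2
    rw [Finset.sum_add_distrib, h3, h4, h5] at hcomb
    linarith
  have hharm : ∀ v : V, K v = ∑ k, transP G v k * K k := by
    intro v
    have e1 : K v = ∑ j ∈ Finset.univ.erase v, statPi G j * M v j :=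
      (Finset.sum_erase _ (by simp [hMdiag])).symm
    have e2 : ∑ j ∈ Finset.univ.erase v, statPi G j * M v j
        = ∑ j ∈ Finset.univ.erase v,
            (statPi G j + ∑ k, transP G v k * (statPi G j * M k j)) := by
      refine Finset.sum_congr rfl fun j hj => ?_
      rw [hMrec v j (Finset.ne_of_mem_erase hj).symm, mul_add, mul_one, Finset.mul_sum]
      congr 1
      refine Finset.sum_congr rfl fun k _ => by ring
    have e3 : ∑ j ∈ Finset.univ.erase v, statPi G j = 1 - statPi G v := by
      rw [Finset.sum_erase_eq_sub (Finset.mem_univ v), KI_sumPi hG]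
    have e4 : ∑ j ∈ Finset.univ.erase v, ∑ k, transP G v k * (statPi G j * M k j)
        = ∑ k, transP G v k * K k - statPi G v * (∑ k, transP G v k * M k v) := by
      rw [Finset.sum_comm]
      have : ∀ k, ∑ j ∈ Finset.univ.erase v, transP G v k * (statPi G j * M k j)
          = transP G v k * K k - transP G v k * (statPi G v * M k v) := by
        intro k
        rw [← Finset.mul_sum, Finset.sum_erase_eq_sub (Finset.mem_univ v), mul_sub]
      rw [Finset.sum_congr rfl fun k _ => this k, Finset.sum_sub_distrib]
      congr 1
      rw [Finset.mul_sum]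
      refine Finset.sum_congr rfl fun k _ => by ring
    rw [e1, e2, Finset.sum_add_distrib, e3, e4, hret v]
    ring
  obtain ⟨v0, -, hv0⟩ := Finset.exists_max_image Finset.univ K ⟨i, Finset.mem_univ i⟩
  have hadj : ∀ v, K v = K v0 → ∀ w, G.Adj v w → K w = K v0 := by
    intro v hv w hvw
    have h0 : ∑ k, transP G v k * (K v0 - K k) = 0 := by
      have hsplit : ∑ k, transP G v k * (K v0 - K k)
          = (∑ k, transP G v k) * K v0 - ∑ k, transP G v k * K k := by
        rw [Finset.sum_mul, ← Finset.sum_sub_distrib]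
        refine Finset.sum_congr rfl fun k _ => by ring
      rw [hsplit, KI_sumP hG v, one_mul, ← hharm v, hv, sub_self]
    have hnn : ∀ k ∈ Finset.univ, 0 ≤ transP G v k * (K v0 - K k) := fun k _ =>
      mul_nonneg (KI_transP_nonneg v k) (sub_nonneg.2 (hv0 k (Finset.mem_univ k)))
    have hz := (Finset.sum_eq_zero_iff_of_nonneg hnn).1 h0 w (Finset.mem_univ w)
    have hP : transP G v w ≠ 0 := by
      unfold transP
      rw [if_pos hvw]
      have := KI_deg_pos hG v
      positivity
    rcases mul_eq_zero.1 hz with h | h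
    · exact absurd h hP
    · linarith [sub_eq_zero.1 h]
  have hconst : ∀ v, K v = K v0 := by
    have step : ∀ (a b : V), G.Walk a b → K a = K v0 → K b = K v0 := by
      intro a b p
      induction p with
      | nil => exact id
      | cons h q ih => exact fun hu => ih (hadj _ hu _ h)
    exact fun v => step v0 v (hG.preconnected v0 v).some rfl
  rw [hfilter i, hfilter i', hconst i, hconst i']
end
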